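/- Under the plurality rule with n voters and m alternatives with utilities i.i.d. from any distribution D on [0,1], the plurality winner (an alternative ranked first by at least ⌈n/m⌉ voters) has expected social welfare at least max(1/m, 1/n) times the maximum expected social welfare over all alternatives. -/

import Mathlib

open MeasureTheory ProbabilityTheory

/-- The `j`-th smallest value (1-indexed) of a list of reals. -/
noncomputable def orderStat (l : List ℝ) (j : ℕ) : ℝ :=
  (l.insertionSort (· ≤ ·)).getD (j - 1) 0

lemma getD_mem_of_lt {l : List ℝ} {j : ℕ} (hj : j < l.length) (d : ℝ) : l.getD j d ∈ l := by
  rw [List.getD_eq_getElem l d hj]; exact List.getElem_mem hj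

lemma orderedInsert_getD (a : ℝ) :
    ∀ (l : List ℝ), l.Pairwise (· ≤ ·) → ∀ (j : ℕ) (d : ℝ), j ≤ l.length →
      (l.orderedInsert (· ≤ ·) a).getD j d =
        if j = 0 then min a (l.getD 0 a)
        else max (l.getD (j-1) d) (min a (l.getD j a)) := by
  intro l
  induction l with
  | nil =>
    intro _ j d hj
    have : j = 0 := Nat.le_zero.mp hj
    subst this
    simp [List.orderedInsert]
  | cons b l ih =>
    intro hs j d hj
    obtain ⟨hbl, hsl⟩ := List.pairwise_cons.mp hs
    have hble : ∀ y ∈ b :: l, b ≤ y := by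
      intro y hy
      rcases List.mem_cons.mp hy with rfl | hy
      · exact le_refl _
      · exact hbl y hy
    by_cases hab : a ≤ b
    · simp only [List.orderedInsert, if_pos hab]
      rcases Nat.eq_zero_or_pos j with rfl | hj1
      · simp [min_eq_left hab]
      · rw [if_neg (Nat.pos_iff_ne_zero.mp hj1)]
        have hgetd : (a :: b :: l).getD j d = (b :: l).getD (j-1) d := by
          rcases Nat.exists_eq_add_of_le hj1 with ⟨j', rfl⟩
          simp [Nat.add_comm 1 j']
        rw [hgetd]
        have hjlen : j - 1 < (b :: l).length := by
          simp only [List.length_cons] at hj ⊢; omega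
        have h1 : min a ((b :: l).getD j a) ≤ (b :: l).getD (j-1) d :=
          le_trans (min_le_left _ _) (le_trans hab (hble _ (getD_mem_of_lt hjlen d)))
        rw [max_eq_left h1]
    · simp only [List.orderedInsert, if_neg hab]
      push_neg at hab
      rcases Nat.eq_zero_or_pos j with rfl | hj1
      · simp [min_eq_right hab.le]
      · rw [if_neg (Nat.pos_iff_ne_zero.mp hj1)]
        rcases Nat.exists_eq_add_of_le hj1 with ⟨j', rfl⟩
        have hgetd : (b :: List.orderedInsert (· ≤ ·) a l).getD (1 + j') d
            = (List.orderedInsert (· ≤ ·) a l).getD j' d := by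
          simp [Nat.add_comm 1 j']
        rw [hgetd, ih hsl j' d (by simp only [List.length_cons] at hj; omega)]
        rcases Nat.eq_zero_or_pos j' with rfl | hj'1
        · simp only [if_pos rfl]
          have hgb : b ≤ min a (l.getD 0 a) := by
            rcases Nat.eq_zero_or_pos l.length with hl0 | hl0
            · rw [List.getD_eq_default _ _ (by omega)]
              simp [hab.le]
            · exact le_min hab.le (hbl _ (getD_mem_of_lt hl0 a))
          simp only [show (1:ℕ)+0 - 1 = 0 by omega, show (1:ℕ)+0 = 0+1 by omega,
            List.getD_cons_succ, List.getD_cons_zero, max_eq_right hgb, if_true]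
        · rw [if_neg (Nat.pos_iff_ne_zero.mp hj'1)]
          rcases Nat.exists_eq_add_of_le hj'1 with ⟨j'', rfl⟩
          simp only [show (1:ℕ)+(1+j'') - 1 = (j''+1) by omega,
            show (1:ℕ)+(1+j'') = (j''+1)+1 by omega,
            show (1:ℕ)+j''-1 = j'' by omega, show (1:ℕ)+j'' = j''+1 by omega,
            List.getD_cons_succ]
          simp [show Nat.succ 0 + (j''+1) = (j''+1)+1 from by omega,
            show Nat.succ 0 + (j''+1) - 1 = j''+1 from by omega, List.getD_cons_succ]

lemma measurable_sorted_getD {α : Type*} [MeasurableSpace α] :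
    ∀ (L : List (α → ℝ)), (∀ f ∈ L, Measurable f) → ∀ (j : ℕ) (d : ℝ),
      Measurable fun x => ((L.map (fun f => f x)).insertionSort (· ≤ ·)).getD j d := by
  intro L
  induction L with
  | nil => intro _ j d; simpa [List.insertionSort] using measurable_const
  | cons f L ih =>
    intro hL j d
    have hf : Measurable f := hL f List.mem_cons_self
    have hL' : ∀ g ∈ L, Measurable g := fun g hg => hL g (List.mem_cons_of_mem f hg)
    by_cases hj : j ≤ L.length
    · have key : ∀ x, ((((f :: L).map (fun f => f x)).insertionSort (· ≤ ·)).getD j d) =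
          if j = 0 then min (f x)
            (((L.map (fun f => f x)).insertionSort (· ≤ ·)).getD 0 (f x))
          else max (((L.map (fun f => f x)).insertionSort (· ≤ ·)).getD (j-1) d)
            (min (f x) (((L.map (fun f => f x)).insertionSort (· ≤ ·)).getD j (f x))) := by
        intro x
        have hlen : ((L.map (fun f => f x)).insertionSort (· ≤ ·)).length = L.length := by
          rw [List.length_insertionSort, List.length_map]
        rw [List.map_cons, List.insertionSort_cons,
          orderedInsert_getD _ _ (List.pairwise_insertionSort _ _) j d (by rw [hlen]; exact hj)]
      simp only [key]
      -- helper to convert default f x into cases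
      have hget : ∀ (t : ℕ), t ≤ L.length →
          Measurable (fun x => ((L.map (fun f => f x)).insertionSort (· ≤ ·)).getD t (f x)) := by
        intro t ht
        rcases eq_or_lt_of_le ht with rfl | hlt
        · have : ∀ x, ((L.map (fun f => f x)).insertionSort (· ≤ ·)).getD L.length (f x) = f x := by
            intro x
            apply List.getD_eq_default
            rw [List.length_insertionSort, List.length_map]
          simpa only [this] using hf
        · have : ∀ x, ((L.map (fun f => f x)).insertionSort (· ≤ ·)).getD t (f x)
              = ((L.map (fun f => f x)).insertionSort (· ≤ ·)).getD t 0 := by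
            intro x
            rw [List.getD_eq_getElem, List.getD_eq_getElem] <;>
              rw [List.length_insertionSort, List.length_map] <;> exact hlt
          simp only [this]
          exact ih hL' t 0
      rcases Nat.eq_zero_or_pos j with rfl | hj1
      · simp only [if_pos rfl]
        exact hf.min (hget 0 (Nat.zero_le _))
      · simp only [if_neg (Nat.pos_iff_ne_zero.mp hj1)]
        exact (ih hL' (j-1) d).max (hf.min (hget j hj))
    · have : ∀ x, ((((f :: L).map (fun f => f x)).insertionSort (· ≤ ·)).getD j d) = d := by
        intro x
        apply List.getD_eq_default
        rw [List.length_insertionSort, List.length_map, List.length_cons]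
        omega
      simpa only [this] using measurable_const

lemma measurable_orderStat (m k : ℕ) :
    Measurable fun x : Fin m → ℝ => orderStat (List.ofFn x) k := by
  have h := measurable_sorted_getD (α := (Fin m → ℝ))
    (List.ofFn fun l : Fin m => (fun x : Fin m → ℝ => x l))
    (by
      intro f hf
      rw [List.mem_ofFn] at hf
      obtain ⟨l, rfl⟩ := hf
      exact measurable_pi_apply l) (k - 1) 0
  have he : ∀ x : Fin m → ℝ,
      (List.ofFn fun l : Fin m => (fun x : Fin m → ℝ => x l)).map (fun f => f x)
        = List.ofFn x := by
    intro x; rw [List.map_ofFn]; rfl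
  simpa only [orderStat, he] using h

lemma orderStat_mono {m : ℕ} (x : Fin m → ℝ) {k : ℕ} (hk1 : 1 ≤ k) (hk : k ≤ m) :
    orderStat (List.ofFn x) k ≤ orderStat (List.ofFn x) m := by
  unfold orderStat
  have hlen : ((List.ofFn x).insertionSort (· ≤ ·)).length = m := by
    rw [List.length_insertionSort, List.length_ofFn]
  have h1 : k - 1 < ((List.ofFn x).insertionSort (· ≤ ·)).length := by omega
  have h2 : m - 1 < ((List.ofFn x).insertionSort (· ≤ ·)).length := by omega
  rw [List.getD_eq_get _ _ ⟨_, h1⟩, List.getD_eq_get _ _ ⟨_, h2⟩]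
  exact (List.pairwise_insertionSort _ _).rel_get_of_le (by simp only [Fin.mk_le_mk]; omega)

lemma orderStat_mem {m : ℕ} (x : Fin m → ℝ) (hx : ∀ l, x l ∈ Set.Icc (0:ℝ) 1) (k : ℕ) :
    orderStat (List.ofFn x) k ∈ Set.Icc (0:ℝ) 1 := by
  unfold orderStat
  by_cases h : k - 1 < ((List.ofFn x).insertionSort (· ≤ ·)).length
  · rw [List.getD_eq_getElem _ _ h]
    have hmem : ((List.ofFn x).insertionSort (· ≤ ·))[k-1] ∈
        (List.ofFn x).insertionSort (· ≤ ·) := List.getElem_mem h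
    rw [List.mem_insertionSort, List.mem_ofFn] at hmem
    obtain ⟨l, hl⟩ := hmem
    exact hl ▸ hx l
  · rw [List.getD_eq_default _ _ (by omega)]
    exact ⟨le_refl 0, zero_le_one⟩

lemma map_vec_eq_pi {Ω : Type*} [MeasurableSpace Ω] (μ : Measure Ω) [IsProbabilityMeasure μ]
    (n m : ℕ) (V : Fin n → Fin m → Ω → ℝ) (hmeas : ∀ i l, Measurable (V i l))
    (hindep : iIndepFun (fun p : Fin n × Fin m => V p.1 p.2) μ)
    (D : Measure ℝ) [IsProbabilityMeasure D] (hlaw : ∀ i l, μ.map (V i l) = D)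
    (i : Fin n) :
    μ.map (fun ω (l : Fin m) => V i l ω) = Measure.pi (fun _ : Fin m => D) := by
  classical
  have hvec : Measurable (fun ω (l : Fin m) => V i l ω) :=
    measurable_pi_lambda _ fun l => hmeas i l
  refine (Measure.pi_eq ?_).symm
  intro s hs
  rw [Measure.map_apply hvec (MeasurableSet.univ_pi hs)]
  have hpre : (fun ω (l : Fin m) => V i l ω) ⁻¹' Set.pi Set.univ s
      = ⋂ l, V i l ⁻¹' s l := by
    ext ω; simp [Set.mem_pi]
  rw [hpre]
  have hinj : Function.Injective (fun l : Fin m => ((i, l) : Fin n × Fin m)) := by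
    intro a b h; simpa using congrArg Prod.snd h
  have h := hindep.meas_biInter (S := Finset.univ.image (fun l : Fin m => (i, l)))
    (s := fun p : Fin n × Fin m => V p.1 p.2 ⁻¹' s p.2)
    (fun p _ => ⟨s p.2, hs p.2, rfl⟩)
  have hint : (⋂ p ∈ Finset.univ.image (fun l : Fin m => ((i, l) : Fin n × Fin m)),
      V p.1 p.2 ⁻¹' s p.2) = ⋂ l, V i l ⁻¹' s l := by
    ext ω; simp
  rw [hint] at h
  rw [h, Finset.prod_image (fun a _ b _ hab => hinj hab)]
  exact Finset.prod_congr rfl fun l _ => by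
    rw [← hlaw i l, Measure.map_apply (hmeas i l) (hs l)]

/-- Plurality: with utilities i.i.d. from any distribution on `[0,1]`, the plurality
winner `w` (the alternative ranked first by the most voters) has expected social
welfare at least `max (1/m) (1/n)` times that of any alternative.
`rank i j = 0` means voter `i` ranks alternative `j` first. -/
theorem stmt15 {Ω : Type*} [MeasurableSpace Ω] (μ : Measure Ω) [IsProbabilityMeasure μ]
    (n m : ℕ) (hn : 0 < n) (hm : 0 < m)
    (V : Fin n → Fin m → Ω → ℝ) (hmeas : ∀ i l, Measurable (V i l))
    (hindep : iIndepFun (fun p : Fin n × Fin m => V p.1 p.2) μ)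
    (D : Measure ℝ) [IsProbabilityMeasure D] (hlaw : ∀ i l, μ.map (V i l) = D)
    (hsupp : D (Set.Icc (0 : ℝ) 1)ᶜ = 0)
    (rank : Fin n → Equiv.Perm (Fin m))
    (SW : Fin m → Ω → ℝ)
    (hSW : ∀ j ω, SW j ω =
      ∑ i, orderStat (List.ofFn fun l => V i l ω) (m - (rank i j : ℕ)))
    (w : Fin m)
    (hw : ∀ j, (Finset.univ.filter fun i => ((rank i) j : ℕ) = 0).card ≤
      (Finset.univ.filter fun i => ((rank i) w : ℕ) = 0).card) :
    ∀ j, max (1 / (m : ℝ)) (1 / (n : ℝ)) * ∫ ω, SW j ω ∂μ ≤ ∫ ω, SW w ω ∂μ := by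
  classical
  intro j
  -- a.e. all utilities lie in [0,1]
  have hae : ∀ᵐ ω ∂μ, ∀ i l, V i l ω ∈ Set.Icc (0:ℝ) 1 := by
    rw [ae_all_iff]
    intro i
    rw [ae_all_iff]
    intro l
    have h0 : μ (V i l ⁻¹' (Set.Icc (0:ℝ) 1)ᶜ) = 0 := by
      rw [← Measure.map_apply (hmeas i l) measurableSet_Icc.compl, hlaw i l]
      exact hsupp
    rw [ae_iff]
    convert h0 using 2
    rfl
  -- the per-voter order statistics
  set F : Fin n → ℕ → Ω → ℝ := fun i k ω => orderStat (List.ofFn fun l => V i l ω) k with hF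
  have hFmeas : ∀ i k, Measurable (F i k) := fun i k =>
    (measurable_orderStat m k).comp (measurable_pi_lambda _ fun l => hmeas i l)
  have hFmem : ∀ i k, ∀ᵐ ω ∂μ, F i k ω ∈ Set.Icc (0:ℝ) 1 := by
    intro i k
    filter_upwards [hae] with ω hω
    exact orderStat_mem _ (fun l => hω i l) k
  have hFint : ∀ i k, Integrable (F i k) μ := by
    intro i k
    refine (integrable_const (1:ℝ)).mono' (hFmeas i k).aestronglyMeasurable ?_
    filter_upwards [hFmem i k] with ω h
    rw [Real.norm_eq_abs, abs_le]
    exact ⟨by linarith [h.1], h.2⟩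
  set A : Fin n → ℕ → ℝ := fun i k => ∫ ω, F i k ω ∂μ with hA
  have hA0 : ∀ i k, 0 ≤ A i k := fun i k =>
    integral_nonneg_of_ae (by filter_upwards [hFmem i k] with ω h using h.1)
  have hAmono : ∀ i k, 1 ≤ k → k ≤ m → A i k ≤ A i m := fun i k h1 h2 =>
    integral_mono_ae (hFint i k) (hFint i m)
      (Filter.Eventually.of_forall fun ω => orderStat_mono _ h1 h2)
  set E : ℝ := ∫ x : Fin m → ℝ, orderStat (List.ofFn x) m ∂(Measure.pi fun _ : Fin m => D)
    with hEdef
  have hE : ∀ i, A i m = E := by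
    intro i
    rw [hEdef, ← map_vec_eq_pi μ n m V hmeas hindep D hlaw i,
      integral_map (measurable_pi_lambda _ fun l => hmeas i l).aemeasurable
        (measurable_orderStat m m).aestronglyMeasurable]
  have hE0 : 0 ≤ E := (hE ⟨0, hn⟩) ▸ hA0 ⟨0, hn⟩ m
  have hSWint : ∀ j', ∫ ω, SW j' ω ∂μ = ∑ i, A i (m - (rank i j' : ℕ)) := by
    intro j'
    simp only [hSW]
    rw [integral_finset_sum _ fun i _ => hFint i _]
  -- counting
  set c : ℕ := (Finset.univ.filter fun i => ((rank i) w : ℕ) = 0).card with hc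
  have hsum : ∑ j' : Fin m, (Finset.univ.filter fun i => ((rank i) j' : ℕ) = 0).card = n := by
    have h1 : ∀ i : Fin n, ∑ j' : Fin m, (if ((rank i) j' : ℕ) = 0 then 1 else 0) = 1 := by
      intro i
      rw [Finset.sum_eq_single ((rank i).symm ⟨0, hm⟩)]
      · simp
      · intro b _ hb
        rw [if_neg]
        intro h0
        exact hb (by rw [← Equiv.symm_apply_apply (rank i) b, Fin.eq_mk_iff_val_eq.mpr h0])
      · simp
    simp only [Finset.card_filter]
    rw [Finset.sum_comm]
    simp [h1]
  have hcn : n ≤ m * c := by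
    calc n = ∑ j' : Fin m, (Finset.univ.filter fun i => ((rank i) j' : ℕ) = 0).card :=
          hsum.symm
      _ ≤ ∑ _j' : Fin m, c := Finset.sum_le_sum fun j' _ => hw j'
      _ = m * c := by simp [Finset.sum_const, mul_comm]
  have hc1 : 1 ≤ c := by
    rcases Nat.eq_zero_or_pos c with h0 | h; · rw [h0, Nat.mul_zero] at hcn; omega
    exact h
  -- upper bound for j
  have hEj : ∫ ω, SW j ω ∂μ ≤ (n : ℝ) * E := by
    rw [hSWint j]
    calc ∑ i, A i (m - (rank i j : ℕ)) ≤ ∑ _i : Fin n, E := by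
          refine Finset.sum_le_sum fun i _ => ?_
          rw [← hE i]
          exact hAmono i _ (by have := (rank i j).isLt; omega) (by omega)
      _ = (n : ℝ) * E := by simp [Finset.sum_const, nsmul_eq_mul]
  have hEj0 : 0 ≤ ∫ ω, SW j ω ∂μ := by
    rw [hSWint j]; exact Finset.sum_nonneg fun i _ => hA0 i _
  -- lower bound for w
  have hEw : (c : ℝ) * E ≤ ∫ ω, SW w ω ∂μ := by
    rw [hSWint w]
    calc (c : ℝ) * E = ∑ i ∈ Finset.univ.filter fun i => ((rank i) w : ℕ) = 0,
          A i (m - (rank i w : ℕ)) := by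
          rw [Finset.sum_congr rfl (fun i hi => ?_), Finset.sum_const, nsmul_eq_mul]
          have h0 : ((rank i) w : ℕ) = 0 := (Finset.mem_filter.mp hi).2
          rw [h0, Nat.sub_zero, hE i]
      _ ≤ ∑ i, A i (m - (rank i w : ℕ)) :=
          Finset.sum_le_sum_of_subset_of_nonneg (Finset.filter_subset _ _)
            fun i _ _ => hA0 i _
  -- final arithmetic
  have hm' : (0:ℝ) < m := Nat.cast_pos.mpr hm
  have hn' : (0:ℝ) < n := Nat.cast_pos.mpr hn
  have hnc : (n : ℝ) ≤ (m : ℝ) * (c : ℝ) := by exact_mod_cast hcn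
  have hc1' : (1:ℝ) ≤ (c : ℝ) := by exact_mod_cast hc1
  rw [max_mul_of_nonneg _ _ hEj0]
  apply max_le
  · rw [one_div, inv_mul_le_iff₀ hm']
    nlinarith [mul_le_mul_of_nonneg_right hnc hE0, mul_le_mul_of_nonneg_left hEw hm'.le]
  · rw [one_div, inv_mul_le_iff₀ hn']
    nlinarith [mul_le_mul_of_nonneg_left hEw hn'.le,
      mul_nonneg (sub_nonneg.mpr hc1') hE0, hEj]
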